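/- Let W and G be independent exponential random variables with rate 1, and let α > 2 and c > 0. Then ∫₀^∞ P[x ≤ (cG/W)^{2/α}] dx = c^{2/α} / sinc(2/α), where sinc(y) = sin(πy)/(πy). -/

import Mathlib

open MeasureTheory ProbabilityTheory Real Set
open scoped ENNReal NNReal

namespace ExpAux

lemma expMeasure_rep : expMeasure 1 =
    volume.withDensity (fun x => ((exponentialPDFReal 1 x).toNNReal : ℝ≥0∞)) := rfl

lemma ae_eq_indicator (g : ℝ → ℝ) :
    (fun x => (exponentialPDFReal 1 x).toNNReal • g x)
      =ᵐ[volume] (Set.Ioi (0:ℝ)).indicator (fun x => Real.exp (-x) * g x) := by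
  have h0 : ∀ᵐ x : ℝ, x ≠ 0 := by
    rw [ae_iff]
    simp [measure_singleton (0 : ℝ)]
  filter_upwards [h0] with x hx
  rcases lt_or_gt_of_ne hx with h | h
  · rw [Set.indicator_of_notMem (by simp [Set.mem_Ioi, not_lt, h.le])]
    have : exponentialPDFReal 1 x = 0 := by
      simp [exponentialPDFReal, gammaPDFReal, if_neg (not_le.mpr h)]
    simp [this]
  · rw [Set.indicator_of_mem (Set.mem_Ioi.mpr h)]
    have hpdf : exponentialPDFReal 1 x = Real.exp (-x) := by
      simp [exponentialPDFReal, gammaPDFReal, if_pos h.le]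
    rw [NNReal.smul_def, hpdf, Real.coe_toNNReal _ (Real.exp_nonneg _), smul_eq_mul]

lemma integrable_expMeasure_iff (g : ℝ → ℝ) :
    Integrable g (expMeasure 1) ↔
      IntegrableOn (fun x => Real.exp (-x) * g x) (Set.Ioi 0) := by
  rw [expMeasure_rep, integrable_withDensity_iff_integrable_smul
    ((measurable_exponentialPDFReal 1).real_toNNReal),
    integrable_congr (ae_eq_indicator g), integrable_indicator_iff measurableSet_Ioi]

lemma integral_expMeasure (g : ℝ → ℝ) :
    ∫ x, g x ∂(expMeasure 1) = ∫ x in Set.Ioi 0, Real.exp (-x) * g x := by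
  rw [expMeasure_rep, integral_withDensity_eq_integral_smul
    ((measurable_exponentialPDFReal 1).real_toNNReal),
    integral_congr_ae (ae_eq_indicator g), integral_indicator measurableSet_Ioi]

lemma integrable_rpow_expMeasure {t : ℝ} (ht : -1 < t) :
    Integrable (fun x : ℝ => x ^ t) (expMeasure 1) := by
  rw [integrable_expMeasure_iff]
  have := Real.GammaIntegral_convergent (show (0:ℝ) < t + 1 by linarith)
  simpa using this

lemma integral_rpow_expMeasure {t : ℝ} (ht : -1 < t) :
    ∫ x, x ^ t ∂(expMeasure 1) = Real.Gamma (t + 1) := by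
  rw [integral_expMeasure, Real.Gamma_eq_integral (show (0:ℝ) < t + 1 by linarith)]
  simp

lemma expMeasure_ae_pos : ∀ᵐ x ∂(expMeasure 1), 0 < x := by
  rw [ae_iff]
  have hset : {x : ℝ | ¬ 0 < x} = Set.Iic 0 := by ext x; simp
  rw [hset, expMeasure_rep, withDensity_apply _ measurableSet_Iic,
    Measure.restrict_congr_set Iio_ae_eq_Iic.symm]
  have h := lintegral_exponentialPDF_of_nonpos (r := 1) (x := 0) le_rfl
  simpa [exponentialPDF, ENNReal.ofReal] using h

end ExpAux

/-- If `W` and `G` are independent `Exp(1)` random variables, `α > 2` and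
`c > 0`, then `∫₀^∞ P[x ≤ (cG/W)^(2/α)] dx = c^(2/α) / sinc(2/α)` where
`sinc y = sin (π y) / (π y)`. -/
theorem integral_ccdf_ratio_exp_rpow
    {Ω : Type*} [MeasureSpace Ω] (μ : Measure Ω) [IsProbabilityMeasure μ]
    (W G : Ω → ℝ) (hW : Measurable W) (hG : Measurable G)
    (hWlaw : μ.map W = expMeasure 1) (hGlaw : μ.map G = expMeasure 1)
    (hindep : IndepFun W G μ)
    (α c : ℝ) (hα : 2 < α) (hc : 0 < c) :
    ∫ x in Ioi (0 : ℝ), (μ {ω | x ≤ (c * G ω / W ω) ^ (2 / α)}).toReal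
      = c ^ (2 / α) / (Real.sin (π * (2 / α)) / (π * (2 / α))) := by
  have hα0 : (0:ℝ) < α := by linarith
  set s : ℝ := 2 / α with hs_def
  have hs0 : 0 < s := by positivity
  have hs1 : s < 1 := by
    rw [hs_def, div_lt_one hα0]; linarith
  -- a.e. positivity of W and G
  have hWpos : ∀ᵐ ω ∂μ, 0 < W ω := by
    have h := ExpAux.expMeasure_ae_pos
    rw [← hWlaw] at h
    exact (ae_map_iff hW.aemeasurable (measurableSet_Ioi (a := (0:ℝ)))).mp h
  have hGpos : ∀ᵐ ω ∂μ, 0 < G ω := by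
    have h := ExpAux.expMeasure_ae_pos
    rw [← hGlaw] at h
    exact (ae_map_iff hG.aemeasurable (measurableSet_Ioi (a := (0:ℝ)))).mp h
  set Y : Ω → ℝ := fun ω => (c * G ω / W ω) ^ s with hY_def
  set A : Ω → ℝ := fun ω => (c * G ω) ^ s with hA_def
  set B : Ω → ℝ := fun ω => (W ω) ^ (-s) with hB_def
  have hYeq : Y =ᵐ[μ] A * B := by
    filter_upwards [hWpos, hGpos] with ω hw hg
    show (c * G ω / W ω) ^ s = (c * G ω) ^ s * (W ω) ^ (-s)
    rw [Real.div_rpow (by positivity) hw.le, Real.rpow_neg hw.le, div_eq_mul_inv]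
  -- measurability
  have hφ : Measurable fun x : ℝ => (c * x) ^ s := by fun_prop
  have hψ : Measurable fun x : ℝ => x ^ (-s) := by fun_prop
  have hχ : Measurable fun x : ℝ => x ^ s := by fun_prop
  have hAB : IndepFun A B μ := hindep.symm.comp hφ hψ
  -- integrability of the pieces
  have hGint : Integrable (fun ω => (G ω) ^ s) μ := by
    have h : Integrable (fun x : ℝ => x ^ s) (μ.map G) := by
      rw [hGlaw]; exact ExpAux.integrable_rpow_expMeasure (by linarith)
    exact (integrable_map_measure hχ.aestronglyMeasurable hG.aemeasurable).mp h
  have hAeq : A =ᵐ[μ] fun ω => c ^ s * (G ω) ^ s := by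
    filter_upwards [hGpos] with ω hg
    exact Real.mul_rpow hc.le hg.le
  have hIntA : Integrable A μ := (hGint.const_mul (c ^ s)).congr hAeq.symm
  have hIntB : Integrable B μ := by
    have h : Integrable (fun x : ℝ => x ^ (-s)) (μ.map W) := by
      rw [hWlaw]; exact ExpAux.integrable_rpow_expMeasure (by linarith)
    exact (integrable_map_measure hψ.aestronglyMeasurable hW.aemeasurable).mp h
  have hIntY : Integrable Y μ := (hAB.integrable_mul hIntA hIntB).congr hYeq.symm
  have hYnn : 0 ≤ᵐ[μ] Y := by
    filter_upwards [hWpos, hGpos] with ω hw hg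
    exact Real.rpow_nonneg (by positivity) _
  -- layer cake
  have hLC := hIntY.integral_eq_integral_meas_le hYnn
  rw [show ∫ x in Ioi (0 : ℝ), (μ {ω | x ≤ (c * G ω / W ω) ^ (2 / α)}).toReal
      = ∫ ω, Y ω ∂μ from hLC.symm]
  -- compute the expectation
  have hIA : ∫ ω, A ω ∂μ = c ^ s * Real.Gamma (s + 1) := by
    rw [integral_congr_ae hAeq, integral_const_mul]
    have h : ∫ ω, (G ω) ^ s ∂μ = ∫ x, x ^ s ∂(μ.map G) :=
      (integral_map hG.aemeasurable hχ.aestronglyMeasurable).symm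
    rw [h, hGlaw, ExpAux.integral_rpow_expMeasure (by linarith)]
  have hIB : ∫ ω, B ω ∂μ = Real.Gamma (1 - s) := by
    have h : ∫ ω, (W ω) ^ (-s) ∂μ = ∫ x, x ^ (-s) ∂(μ.map W) :=
      (integral_map hW.aemeasurable hψ.aestronglyMeasurable).symm
    rw [hB_def, h, hWlaw, ExpAux.integral_rpow_expMeasure (by linarith)]
    ring_nf
  rw [integral_congr_ae hYeq, hAB.integral_mul_eq_mul_integral hIntA.aestronglyMeasurable hIntB.aestronglyMeasurable, hIA, hIB]
  -- final algebra
  have hsin : Real.sin (π * s) ≠ 0 :=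
    ne_of_gt (Real.sin_pos_of_pos_of_lt_pi (by positivity)
      (by nlinarith [Real.pi_pos]))
  have hrefl : Real.Gamma s * Real.Gamma (1 - s) = π / Real.sin (π * s) :=
    Real.Gamma_mul_Gamma_one_sub s
  have hrhs : c ^ s / (Real.sin (π * s) / (π * s)) = c ^ s * s * (π / Real.sin (π * s)) := by
    rw [div_div_eq_mul_div]
    field_simp
  rw [Real.Gamma_add_one (ne_of_gt hs0), hrhs, ← hrefl]
  ring
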